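/- arXiv:1801.03014 — 2 statements merged into one kernel-verified Lean document; each statement's English description precedes it below -/
import Mathlib

section
/- Let Ω = (−1,1) ⊂ ℝ, f(t) = √(1+t²) − 1 for t ∈ ℝ, T₀ ≡ 1, and consider the functional 𝔉[w] = ∫_{−1}^{1} (√(1+|w'|²) − 1 − w') dx for w ∈ W^{1,1}((−1,1)). Then inf_{W^{1,1}((−1,1))} 𝔉 = −2, and there exists no u ∈ W^{1,1}((−1,1)) with 𝔉[u] = −2; i.e., the infimum is not attained. -/
open MeasureTheory

noncomputable section

/-- `u ∈ W^{1,1}((−1,1))` with weak derivative `u'`. -/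
def HasWeakDeriv1 (u u' : ℝ → ℝ) : Prop :=
  IntegrableOn u (Set.Ioo (-1 : ℝ) 1) volume ∧
  IntegrableOn u' (Set.Ioo (-1 : ℝ) 1) volume ∧
  ∀ φ : ℝ → ℝ, ContDiff ℝ 1 φ → HasCompactSupport φ →
    tsupport φ ⊆ Set.Ioo (-1 : ℝ) 1 →
    ∫ x in Set.Ioo (-1 : ℝ) 1, u x * deriv φ x =
      - ∫ x in Set.Ioo (-1 : ℝ) 1, u' x * φ x

/-- The functional `𝔉[w] = ∫_{−1}^{1} (√(1+|w'|²) − 1 − w') dx`. -/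
noncomputable def exFunctional (u' : ℝ → ℝ) : ℝ :=
  ∫ x in Set.Ioo (-1 : ℝ) 1, (Real.sqrt (1 + (u' x) ^ 2) - 1 - u' x)

lemma volume_Ioo_neg_one_one : (volume (Set.Ioo (-1 : ℝ) 1)).toReal = 2 := by
  rw [Real.volume_Ioo]
  norm_num

lemma sqrt_le (t : ℝ) : Real.sqrt (1 + t ^ 2) ≤ 1 + |t| := by
  rw [show (1 : ℝ) + |t| = Real.sqrt ((1 + |t|) ^ 2) by
    rw [Real.sqrt_sq (by positivity)]]
  apply Real.sqrt_le_sqrt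
  have := abs_nonneg t
  nlinarith [sq_abs t]

lemma sqrt_gt (t : ℝ) : t < Real.sqrt (1 + t ^ 2) := by
  rcases le_or_gt t 0 with h | h
  · exact lt_of_le_of_lt h (Real.sqrt_pos.2 (by positivity))
  · rw [show t = Real.sqrt (t ^ 2) from (Real.sqrt_sq h.le).symm]
    nth_rewrite 2 [Real.sqrt_sq h.le]
    exact Real.sqrt_lt_sqrt (by positivity) (by linarith)

/-- Affine functions are in `W^{1,1}`. -/
lemma affine_hasWeakDeriv (c : ℝ) :
    HasWeakDeriv1 (fun x => c * x) (fun _ => c) := by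
  refine ⟨?_, ?_, ?_⟩
  · exact ((continuous_const.mul continuous_id).integrableOn_Icc (μ := volume)
      (a := (-1:ℝ)) (b := 1)).mono_set Set.Ioo_subset_Icc_self
  · exact (integrableOn_const (by norm_num [Real.volume_Ioo]))
  · intro φ hφ hcs hsupp
    have hφ1 : φ 1 = 0 := by
      apply image_eq_zero_of_notMem_tsupport
      intro h
      exact absurd (hsupp h).2 (lt_irrefl 1)
    have hφm1 : φ (-1) = 0 := by
      apply image_eq_zero_of_notMem_tsupport
      intro h
      exact absurd (hsupp h).1 (lt_irrefl (-1))
    have key : ∫ x in (-1:ℝ)..1, (c * x) * deriv φ x =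
        (c * 1) * φ 1 - (c * (-1)) * φ (-1) - ∫ x in (-1:ℝ)..1, c * φ x := by
      apply intervalIntegral.integral_mul_deriv_eq_deriv_mul
        (u := fun x => c * x) (u' := fun _ => c)
      · intro x _
        simpa using (hasDerivAt_id x).const_mul c
      · intro x _
        exact ((hφ.differentiable one_ne_zero).differentiableAt).hasDerivAt
      · exact intervalIntegrable_const
      · exact ((hφ.continuous_deriv le_rfl).continuousOn).intervalIntegrable
    have h2 : ∀ g : ℝ → ℝ, ∫ x in Set.Ioo (-1:ℝ) 1, g x = ∫ x in (-1:ℝ)..1, g x := by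
      intro g
      rw [intervalIntegral.integral_of_le (by norm_num : (-1:ℝ) ≤ 1),
        ← integral_Ioc_eq_integral_Ioo]
    rw [h2, h2, key, hφ1, hφm1]
    ring

/-- Value of the functional on a constant slope. -/
lemma exFunctional_const (c : ℝ) :
    exFunctional (fun _ => c) = 2 * (Real.sqrt (1 + c ^ 2) - 1 - c) := by
  rw [exFunctional, setIntegral_const, smul_eq_mul, Measure.real, volume_Ioo_neg_one_one]

/-- Strict lower bound. -/
lemma exFunctional_gt (u' : ℝ → ℝ) (hu' : IntegrableOn u' (Set.Ioo (-1 : ℝ) 1) volume) :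
    -2 < exFunctional u' := by
  set F : ℝ → ℝ := fun x => Real.sqrt (1 + (u' x) ^ 2) - u' x with hF
  have hFpos : ∀ x, 0 < F x := fun x => sub_pos.2 (sqrt_gt (u' x))
  have hFmeas : AEStronglyMeasurable F (volume.restrict (Set.Ioo (-1:ℝ) 1)) := by
    have hcont : Continuous (fun t : ℝ => Real.sqrt (1 + t ^ 2) - t) := by
      fun_prop
    exact hcont.comp_aestronglyMeasurable hu'.aestronglyMeasurable
  have hFint : IntegrableOn F (Set.Ioo (-1:ℝ) 1) volume := by
    apply Integrable.mono' (g := fun x => 1 + 2 * |u' x|)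
    · exact (integrableOn_const (by norm_num [Real.volume_Ioo])).add
        (hu'.abs.const_mul 2)
    · exact hFmeas
    · filter_upwards with x
      rw [Real.norm_eq_abs, abs_of_pos (hFpos x)]
      have h1 := sqrt_le (u' x)
      have h2 := neg_abs_le (u' x)
      simp only [hF]
      linarith
  have hFintpos : 0 < ∫ x in Set.Ioo (-1:ℝ) 1, F x := by
    rw [integral_pos_iff_support_of_nonneg (fun x => (hFpos x).le) hFint]
    have : Function.support F = Set.univ := by
      ext x; simp [Function.mem_support, (hFpos x).ne']
    rw [this]
    norm_num [Real.volume_Ioo]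
  have heq : exFunctional u' = (∫ x in Set.Ioo (-1:ℝ) 1, F x) - 2 := by
    rw [exFunctional]
    have : ∀ x, Real.sqrt (1 + (u' x) ^ 2) - 1 - u' x = F x - 1 := by
      intro x; simp only [hF]; ring
    simp_rw [this]
    rw [integral_sub hFint (integrableOn_const (by norm_num [Real.volume_Ioo]))]
    rw [setIntegral_const, smul_eq_mul, Measure.real, volume_Ioo_neg_one_one]
    ring
  rw [heq]
  linarith

/-- **Example 1.4 (non-existence of minimisers).** For `f(t) = √(1+t²) − 1`, `T₀ ≡ 1`
and `Ω = (−1,1)`, the infimum of `𝔉` over `W^{1,1}((−1,1))` equals `−2`, and it is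
not attained. -/
theorem example_infimum_not_attained :
    IsGLB {r : ℝ | ∃ u u' : ℝ → ℝ, HasWeakDeriv1 u u' ∧ r = exFunctional u'} (-2) ∧
    ¬ ∃ u u' : ℝ → ℝ, HasWeakDeriv1 u u' ∧ exFunctional u' = -2 := by
  constructor
  · constructor
    · rintro r ⟨u, u', hwd, rfl⟩
      exact (exFunctional_gt u' hwd.2.1).le
    · intro b hb
      -- b ≤ -2 + 1/n for each n ≥ 1
      have key : ∀ n : ℕ, 1 ≤ n → b ≤ -2 + 1 / n := by
        intro n hn
        have hnpos : (0:ℝ) < n := by exact_mod_cast hn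
        have hmem : exFunctional (fun _ => (n:ℝ)) ∈
            {r : ℝ | ∃ u u' : ℝ → ℝ, HasWeakDeriv1 u u' ∧ r = exFunctional u'} :=
          ⟨fun x => (n:ℝ) * x, fun _ => (n:ℝ), affine_hasWeakDeriv n, rfl⟩
        have hle := hb hmem
        have hval : exFunctional (fun _ => (n:ℝ)) ≤ -2 + 1 / n := by
          rw [exFunctional_const]
          have hsq : Real.sqrt (1 + (n:ℝ) ^ 2) ≤ (n:ℝ) + 1 / (2 * n) := by
            rw [show (n:ℝ) + 1 / (2 * n) = Real.sqrt (((n:ℝ) + 1 / (2 * n)) ^ 2) by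
              rw [Real.sqrt_sq (by positivity)]]
            apply Real.sqrt_le_sqrt
            have hhalf : (n:ℝ) * (1 / (2 * n)) = 1 / 2 := by field_simp
            nlinarith [sq_nonneg (1 / (2 * (n:ℝ)))]
          have h1n : 1 / (2 * (n:ℝ)) ≤ 1 / (2 * n) := le_refl _
          have : 2 * (Real.sqrt (1 + (n:ℝ) ^ 2) - 1 - n) ≤ 2 * ((n:ℝ) + 1/(2*n) - 1 - n) := by
            linarith
          calc 2 * (Real.sqrt (1 + (n:ℝ) ^ 2) - 1 - n) ≤ 2 * ((n:ℝ) + 1/(2*n) - 1 - n) := this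
            _ = -2 + 1 / n := by field_simp; ring
        linarith
      by_contra hgt
      push_neg at hgt
      obtain ⟨n, hn⟩ := exists_nat_gt (1 / (b + 2))
      have hn1 : 1 ≤ max n 1 := le_max_right _ _
      have hb2 : 0 < b + 2 := by linarith
      have hnn : 1 / (b + 2) < (max n 1 : ℕ) := by
        calc (1:ℝ) / (b + 2) < n := hn
          _ ≤ (max n 1 : ℕ) := by exact_mod_cast le_max_left n 1
      have hmn : (0:ℝ) < (max n 1 : ℕ) := by
        have : (1:ℕ) ≤ max n 1 := hn1
        exact_mod_cast Nat.lt_of_lt_of_le Nat.zero_lt_one this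
      have := key (max n 1) hn1
      rw [div_lt_iff₀ hb2] at hnn
      have h2 : 1 / ((max n 1 : ℕ):ℝ) < b + 2 := by
        rw [div_lt_iff₀ hmn]
        linarith [mul_comm (b+2) ((max n 1 : ℕ):ℝ)]
      linarith
  · rintro ⟨u, u', hwd, heq⟩
    exact (exFunctional_gt u' hwd.2.1).ne' heq
end
end

section
/- Let Ω ⊂ ℝⁿ be a bounded Lipschitz domain, let F ∈ C¹(ℝ^{N×n}) be convex with ν|z| − L ≤ F(z) ≤ L(1+|z|) for all z, and let T₀ ∈ L^∞(Ω;ℝ^{N×n}). If u ∈ W^{1,1}(Ω;ℝ^N) minimises 𝓕[w] = ∫_Ω (F(∇w) − T₀·∇w) dx among all w ∈ W^{1,1}(Ω;ℝ^N), then σ := D_z F(∇u) − T₀ belongs to L^∞_⊥(Ω;ℝ^{N×n}) and is the unique maximiser of the dual functional ℛ_{T₀}[χ] = −∫_Ω F*(T₀ + χ) dx over L^∞_⊥(Ω;ℝ^{N×n}). -/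
open MeasureTheory Filter Topology Set
open scoped ENNReal RealInnerProductSpace

noncomputable section

/-- Euclidean space `ℝⁿ`. -/
abbrev EVec (n : ℕ) := EuclideanSpace ℝ (Fin n)

/-- Frobenius inner product of two "matrices". -/
def mdot {ι κ : Type*} [Fintype ι] [Fintype κ] (A B : ι → κ → ℝ) : ℝ :=
  ∑ a, ∑ i, A a i * B a i

/-- Frobenius norm. -/
noncomputable def mnorm {ι κ : Type*} [Fintype ι] [Fintype κ] (A : ι → κ → ℝ) : ℝ :=
  Real.sqrt (mdot A A)

/-- Euclidean norm of a vector given as a tuple. -/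
noncomputable def vnorm {ι : Type*} [Fintype ι] (v : ι → ℝ) : ℝ :=
  Real.sqrt (∑ a, v a ^ 2)

/-- `Ω ⊆ ℝⁿ` is a (nonempty, open, connected) Lipschitz domain: every boundary point has
a neighbourhood on which `Ω` can be flattened to a half space by a bi-Lipschitz map. -/
def IsLipschitzDomain {n : ℕ} (Ω : Set (EVec n)) : Prop :=
  IsOpen Ω ∧ Ω.Nonempty ∧ IsConnected Ω ∧
  ∀ x ∈ frontier Ω, ∃ (U : Set (EVec n)) (h hinv : EVec n → EVec n) (K : NNReal)
      (e : EVec n),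
    ‖e‖ = 1 ∧ IsOpen U ∧ x ∈ U ∧ LipschitzOnWith K h U ∧
    LipschitzOnWith K hinv (h '' U) ∧ (∀ y ∈ U, hinv (h y) = y) ∧
    h '' (U ∩ Ω) = (h '' U) ∩ {y : EVec n | 0 < ⟪e, y⟫}

/-- `Du` is the weak (distributional) gradient of `u` on `Ω`, and both are integrable;
i.e. `u ∈ W^{1,1}(Ω; ℝ^ι)` with weak gradient `Du`. -/
def HasWeakDerivOn {n : ℕ} {ι : Type*} [Fintype ι] (Ω : Set (EVec n))
    (u : EVec n → ι → ℝ) (Du : EVec n → ι → Fin n → ℝ) : Prop :=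
  IntegrableOn u Ω volume ∧ IntegrableOn Du Ω volume ∧
  ∀ φ : EVec n → ℝ, ContDiff ℝ 1 φ → HasCompactSupport φ → tsupport φ ⊆ Ω →
    ∀ (a : ι) (i : Fin n),
      ∫ x in Ω, u x a * fderiv ℝ φ x (EuclideanSpace.single i 1) =
        - ∫ x in Ω, Du x a i * φ x

/-- `u ∈ W^{1,2}(Ω;ℝ^ι)` with weak gradient `Du`. -/
def MemW12 {n : ℕ} {ι : Type*} [Fintype ι] (Ω : Set (EVec n))
    (u : EVec n → ι → ℝ) (Du : EVec n → ι → Fin n → ℝ) : Prop :=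
  HasWeakDerivOn Ω u Du ∧ IntegrableOn (fun x => vnorm (u x) ^ 2) Ω volume ∧
    IntegrableOn (fun x => mnorm (Du x) ^ 2) Ω volume

/-- vanishing mean value `(u)_Ω = 0`. -/
def ZeroMean {n : ℕ} {ι : Type*} [Fintype ι] (Ω : Set (EVec n))
    (u : EVec n → ι → ℝ) : Prop :=
  ∀ a : ι, ∫ x in Ω, u x a = 0

/-- The `L^∞(Ω)` norm of a matrix field (w.r.t. the pointwise Frobenius norm). -/
noncomputable def linfNormOn {n N : ℕ} (Ω : Set (EVec n))
    (T : EVec n → Fin N → Fin n → ℝ) : ℝ≥0∞ :=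
  essSup (fun x => ENNReal.ofReal (mnorm (T x))) (volume.restrict Ω)

/-- `T ∈ W^{1,∞}(Ω)`: bounded and Lipschitz on `Ω`. -/
def MemW1inf {n N : ℕ} (Ω : Set (EVec n)) (T : EVec n → Fin N → Fin n → ℝ) : Prop :=
  ∃ C : NNReal, (∀ x ∈ Ω, ‖T x‖ ≤ C) ∧ LipschitzOnWith C T Ω

/-- `T ∈ W^{2,∞}(Ω)`: `T` is bounded with bounded Lipschitz derivative on `Ω`. -/
def MemW2inf {n N : ℕ} (Ω : Set (EVec n)) (T : EVec n → Fin N → Fin n → ℝ) : Prop :=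
  ∃ (C : NNReal) (DT : EVec n → EVec n →L[ℝ] (Fin N → Fin n → ℝ)),
    (∀ x ∈ Ω, ‖T x‖ ≤ C) ∧ (∀ x ∈ Ω, HasFDerivWithinAt T (DT x) Ω x) ∧
    (∀ x ∈ Ω, ‖DT x‖ ≤ C) ∧ LipschitzOnWith C DT Ω

/-- The nonlinear map `A(z) = f'(|z|) z / |z|` (equal to `0` at `z = 0`). -/
noncomputable def Amap {N n : ℕ} (f' : ℝ → ℝ) (z : Fin N → Fin n → ℝ) :
    Fin N → Fin n → ℝ :=
  fun a i => (f' (mnorm z) / mnorm z) * z a i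

/-- `u` is a weak solution of the Neumann problem for the integrand `f(|·|)` and datum `T₀`. -/
def IsWeakSolution {n N : ℕ} (Ω : Set (EVec n)) (f' : ℝ → ℝ)
    (T₀ : EVec n → Fin N → Fin n → ℝ)
    (u : EVec n → Fin N → ℝ) (Du : EVec n → Fin N → Fin n → ℝ) : Prop :=
  HasWeakDerivOn Ω u Du ∧
  ∀ φ Dφ, HasWeakDerivOn Ω φ Dφ →
    ∫ x in Ω, mdot (Amap f' (Du x)) (Dφ x) = ∫ x in Ω, mdot (T₀ x) (Dφ x)

/-- The functional `𝔉[w] = ∫_Ω (f(|∇w|) − T₀ · ∇w) dx` (as a function of the gradient). -/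
noncomputable def FF {n N : ℕ} (Ω : Set (EVec n)) (f : ℝ → ℝ)
    (T₀ : EVec n → Fin N → Fin n → ℝ) (Du : EVec n → Fin N → Fin n → ℝ) : ℝ :=
  ∫ x in Ω, (f (mnorm (Du x)) - mdot (T₀ x) (Du x))

/-- The regularised functional `𝔉_k[w] = 𝔉[w] + (2k)⁻¹ ∫_Ω |∇w|² dx`. -/
noncomputable def FFk {n N : ℕ} (Ω : Set (EVec n)) (f : ℝ → ℝ)
    (T₀ : EVec n → Fin N → Fin n → ℝ) (k : ℕ)
    (Du : EVec n → Fin N → Fin n → ℝ) : ℝ :=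
  FF Ω f T₀ Du + (2 * (k : ℝ))⁻¹ * ∫ x in Ω, mnorm (Du x) ^ 2

end

/-- The functional `𝓕[w] = ∫_Ω (F(∇w) − T₀·∇w) dx` for a general integrand `F`. -/
noncomputable def FFgen {n N : ℕ} (Ω : Set (EVec n)) (F : (Fin N → Fin n → ℝ) → ℝ)
    (T₀ : EVec n → Fin N → Fin n → ℝ) (Du : EVec n → Fin N → Fin n → ℝ) : ℝ :=
  ∫ x in Ω, (F (Du x) - mdot (T₀ x) (Du x))

/-- The elementary matrix with a `1` in position `(a,i)`. -/
def basisMat {N n : ℕ} (a : Fin N) (i : Fin n) : Fin N → Fin n → ℝ :=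
  fun a' i' => if a' = a ∧ i' = i then 1 else 0

/-- The gradient `D_z F(z)` of `F : ℝ^{N×n} → ℝ`, as a matrix. -/
noncomputable def DFmat {N n : ℕ} (F : (Fin N → Fin n → ℝ) → ℝ)
    (z : Fin N → Fin n → ℝ) : Fin N → Fin n → ℝ :=
  fun a i => fderiv ℝ F z (basisMat a i)

/-- `χ ∈ L^∞_⊥(Ω;ℝ^{N×n})`: a bounded measurable matrix field which annihilates all
`W^{1,1}`-gradients. -/
def MemLinfPerp {n N : ℕ} (Ω : Set (EVec n)) (χ : EVec n → Fin N → Fin n → ℝ) : Prop :=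
  AEStronglyMeasurable χ (volume.restrict Ω) ∧ (∃ C : ℝ, ∀ x ∈ Ω, mnorm (χ x) ≤ C) ∧
  ∀ (w : EVec n → Fin N → ℝ) (Dw : EVec n → Fin N → Fin n → ℝ),
    HasWeakDerivOn Ω w Dw → ∫ x in Ω, mdot (χ x) (Dw x) = 0

/-- The shifted convex conjugate `F*(z*) + F(0) = sup_w (z*·w − F(w) + F(0)) ∈ [0,∞]`,
valued in `ℝ≥0∞` so that infeasible points (`F*(z*) = ∞`) are handled correctly. -/
noncomputable def FstarShift {N n : ℕ} (F : (Fin N → Fin n → ℝ) → ℝ)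
    (z : Fin N → Fin n → ℝ) : ℝ≥0∞ :=
  ⨆ w : Fin N → Fin n → ℝ, ENNReal.ofReal (mdot z w - F w + F 0)

/-- The dual functional `ℛ_{T₀}[χ] = −∫_Ω F*(T₀+χ) dx`, valued in `EReal` (it equals
`F(0)·|Ω| − ∫_Ω (F*(T₀+χ) + F(0)) dx`, where the last integrand is nonnegative and the
value is `−∞` if `F*(T₀+χ)` is not integrable). -/
noncomputable def Rdual {n N : ℕ} (Ω : Set (EVec n)) (F : (Fin N → Fin n → ℝ) → ℝ)
    (T₀ χ : EVec n → Fin N → Fin n → ℝ) : EReal :=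
  ((F 0 * (volume Ω).toReal : ℝ) : EReal) -
    ((∫⁻ x in Ω, FstarShift F (T₀ x + χ x) : ℝ≥0∞) : EReal)



section AuxMatrix
noncomputable def toE {N n : ℕ} (A : Fin N → Fin n → ℝ) : EuclideanSpace ℝ (Fin N × Fin n) :=
  WithLp.toLp 2 (fun p : Fin N × Fin n => A p.1 p.2)

lemma toE_add {N n : ℕ} (A B : Fin N → Fin n → ℝ) : toE (A + B) = toE A + toE B := rfl
lemma toE_smul {N n : ℕ} (c : ℝ) (A : Fin N → Fin n → ℝ) : toE (c • A) = c • toE A := rfl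
lemma toE_sub {N n : ℕ} (A B : Fin N → Fin n → ℝ) : toE (A - B) = toE A - toE B := rfl

lemma mdot_eq_inner {N n : ℕ} (A B : Fin N → Fin n → ℝ) : mdot A B = ⟪toE A, toE B⟫ := by
  simp [mdot, toE, PiLp.inner_apply, RCLike.inner_apply, Fintype.sum_prod_type, mul_comm,
    starRingEnd_apply]

lemma mnorm_eq_norm {N n : ℕ} (A : Fin N → Fin n → ℝ) : mnorm A = ‖toE A‖ := by
  rw [mnorm, mdot_eq_inner, real_inner_self_eq_norm_sq]
  exact Real.sqrt_sq (norm_nonneg _)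

lemma mnorm_nonneg {N n : ℕ} (A : Fin N → Fin n → ℝ) : 0 ≤ mnorm A := by
  rw [mnorm_eq_norm]; exact norm_nonneg _

lemma mnorm_add_le {N n : ℕ} (A B : Fin N → Fin n → ℝ) : mnorm (A + B) ≤ mnorm A + mnorm B := by
  simp only [mnorm_eq_norm, toE_add]; exact norm_add_le _ _

lemma mnorm_smul {N n : ℕ} (c : ℝ) (A : Fin N → Fin n → ℝ) : mnorm (c • A) = |c| * mnorm A := by
  simp only [mnorm_eq_norm, toE_smul, norm_smul, Real.norm_eq_abs]

lemma abs_mdot_le {N n : ℕ} (A B : Fin N → Fin n → ℝ) : |mdot A B| ≤ mnorm A * mnorm B := by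
  rw [mdot_eq_inner, mnorm_eq_norm, mnorm_eq_norm]; exact abs_real_inner_le_norm _ _

lemma mdot_comm {N n : ℕ} (A B : Fin N → Fin n → ℝ) : mdot A B = mdot B A := by
  simp [mdot, mul_comm]

lemma mdot_add_right {N n : ℕ} (A B C : Fin N → Fin n → ℝ) :
    mdot A (B + C) = mdot A B + mdot A C := by
  simp [mdot, Pi.add_apply, mul_add, Finset.sum_add_distrib]

lemma mdot_add_left {N n : ℕ} (A B C : Fin N → Fin n → ℝ) :
    mdot (A + B) C = mdot A C + mdot B C := by
  simp [mdot, Pi.add_apply, add_mul, Finset.sum_add_distrib]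

lemma mdot_sub_left {N n : ℕ} (A B C : Fin N → Fin n → ℝ) :
    mdot (A - B) C = mdot A C - mdot B C := by
  simp [mdot, Pi.sub_apply, sub_mul, Finset.sum_sub_distrib]

lemma mdot_sub_right {N n : ℕ} (A B C : Fin N → Fin n → ℝ) :
    mdot A (B - C) = mdot A B - mdot A C := by
  simp [mdot, Pi.sub_apply, mul_sub, Finset.sum_sub_distrib]

lemma mdot_smul_right {N n : ℕ} (c : ℝ) (A B : Fin N → Fin n → ℝ) :
    mdot A (c • B) = c * mdot A B := by
  simp [mdot, Finset.mul_sum, mul_comm, mul_assoc, mul_left_comm]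

lemma mdot_smul_left {N n : ℕ} (c : ℝ) (A B : Fin N → Fin n → ℝ) :
    mdot (c • A) B = c * mdot A B := by
  simp [mdot, Finset.mul_sum, mul_comm, mul_assoc, mul_left_comm]

lemma mnorm_sub_le {N n : ℕ} (A B : Fin N → Fin n → ℝ) : mnorm (A - B) ≤ mnorm A + mnorm B := by
  simp only [mnorm_eq_norm, toE_sub]; exact norm_sub_le _ _

lemma mdot_self_eq {N n : ℕ} (A : Fin N → Fin n → ℝ) : mdot A A = mnorm A ^ 2 := by
  rw [mnorm]; rw [Real.sq_sqrt]; rw [mdot_eq_inner]; exact real_inner_self_nonneg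

lemma mnorm_eq_zero_iff {N n : ℕ} (A : Fin N → Fin n → ℝ) : mnorm A = 0 ↔ A = 0 := by
  rw [mnorm_eq_norm, norm_eq_zero]
  constructor
  · intro h; funext a i; exact congrFun (congrArg WithLp.ofLp h) (a, i)
  · rintro rfl; rfl

lemma continuous_mdot {N n : ℕ} : Continuous (fun p : (Fin N → Fin n → ℝ) × (Fin N → Fin n → ℝ) => mdot p.1 p.2) := by
  unfold mdot
  exact continuous_finset_sum _ fun a _ => continuous_finset_sum _ fun i _ =>
    (by fun_prop)

lemma continuous_mnorm {N n : ℕ} : Continuous (fun A : Fin N → Fin n → ℝ => mnorm A) := by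
  unfold mnorm
  exact Real.continuous_sqrt.comp (continuous_mdot.comp (continuous_id.prodMk continuous_id))

lemma mnorm_le_pi_norm {N n : ℕ} (A : Fin N → Fin n → ℝ) :
    mnorm A ≤ Real.sqrt (N * n) * ‖A‖ := by
  rw [mnorm]
  have h : mdot A A ≤ (N * n : ℝ) * ‖A‖ ^ 2 := by
    have : ∀ a i, A a i * A a i ≤ ‖A‖ ^ 2 := by
      intro a i
      have h1 : |A a i| ≤ ‖A‖ := by
        calc |A a i| = ‖A a i‖ := rfl
        _ ≤ ‖A a‖ := norm_le_pi_norm (A a) i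
        _ ≤ ‖A‖ := norm_le_pi_norm A a
      calc A a i * A a i = |A a i| ^ 2 := by rw [sq_abs]; ring
      _ ≤ ‖A‖ ^ 2 := by
          apply pow_le_pow_left₀ (abs_nonneg _) h1
    calc mdot A A ≤ ∑ a : Fin N, ∑ i : Fin n, ‖A‖ ^ 2 := by
          exact Finset.sum_le_sum fun a _ => Finset.sum_le_sum fun i _ => this a i
    _ = (N * n : ℝ) * ‖A‖ ^ 2 := by simp [mul_assoc]
  calc Real.sqrt (mdot A A) ≤ Real.sqrt ((N * n : ℝ) * ‖A‖ ^ 2) := Real.sqrt_le_sqrt h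
  _ = Real.sqrt (N * n) * ‖A‖ := by
      rw [Real.sqrt_mul (by positivity), Real.sqrt_sq (norm_nonneg _)]

end AuxMatrix

section B
variable {N n : ℕ} {F : (Fin N → Fin n → ℝ) → ℝ} {L : ℝ}

lemma sum_smul_basisMat (w : Fin N → Fin n → ℝ) :
    (∑ a : Fin N, ∑ i : Fin n, w a i • basisMat a i) = w := by
  funext a' i'
  simp only [Finset.sum_apply, Pi.smul_apply, basisMat, smul_eq_mul]
  rw [Finset.sum_eq_single a']
  · rw [Finset.sum_eq_single i']
    · simp
    · intro b _ hb; simp [Ne.symm hb]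
    · simp
  · intro b _ hb; apply Finset.sum_eq_zero; intro i _; simp [Ne.symm hb]
  · simp

lemma fderiv_apply_eq_mdot (hF : Differentiable ℝ F) (z w : Fin N → Fin n → ℝ) :
    fderiv ℝ F z w = mdot (DFmat F z) w := by
  conv_lhs => rw [← sum_smul_basisMat w]
  rw [map_sum]
  unfold mdot DFmat
  congr 1; funext a
  rw [map_sum]
  congr 1; funext i
  rw [(fderiv ℝ F z).map_smul]
  simp [mul_comm]

lemma convexOn_line (hFconv : ConvexOn ℝ Set.univ F) (z v : Fin N → Fin n → ℝ) :
    ConvexOn ℝ Set.univ (fun t : ℝ => F (z + t • v)) := by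
  refine ⟨convex_univ, ?_⟩
  intro a _ b _ p q hp hq hpq
  have key : z + (p * a + q * b) • v = p • (z + a • v) + q • (z + b • v) := by
    have h2 : p • (z + a • v) + q • (z + b • v) = (p + q) • z + (p * a + q * b) • v := by
      module
    rw [h2, hpq, one_smul, add_comm]
  simp only [smul_eq_mul]
  rw [key]
  exact hFconv.2 (mem_univ _) (mem_univ _) hp hq hpq

lemma hasDerivAt_line (hF : Differentiable ℝ F) (z v : Fin N → Fin n → ℝ) :
    HasDerivAt (fun t : ℝ => F (z + t • v)) (mdot (DFmat F z) v) 0 := by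
  have h1 : HasDerivAt (fun t : ℝ => z + t • v) v 0 := by
    simpa using ((hasDerivAt_id (0:ℝ)).smul_const v).const_add z
  have h2 := (hF (z + (0:ℝ) • v)).hasFDerivAt.comp_hasDerivAt 0 h1
  simp only [zero_smul, add_zero] at h2
  rw [← fderiv_apply_eq_mdot hF]
  exact h2

/-- one-sided Lipschitz bound from linear growth, positivity and convexity -/
lemma F_le_add_lip (hFpos : ∀ z, 0 ≤ F z) (hFconv : ConvexOn ℝ Set.univ F)
    (hFg : ∀ z, F z ≤ L * (1 + mnorm z)) (hL : 0 ≤ L) (x h : Fin N → Fin n → ℝ) :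
    F (x + h) ≤ F x + L * mnorm h := by
  have key : ∀ t : ℝ, 0 < t → t ≤ 1 →
      F (x + h) ≤ F x + L * mnorm h + t * (L * (1 + mnorm x)) := by
    intro t ht ht1
    have hconv := hFconv.2 (mem_univ x) (mem_univ (x + t⁻¹ • h))
      (by linarith : (0:ℝ) ≤ 1 - t) ht.le (by ring)
    have hxh : (1 - t) • x + t • (x + t⁻¹ • h) = x + h := by
      rw [smul_add, smul_smul, mul_inv_cancel₀ ht.ne', one_smul, sub_smul, one_smul]
      abel
    rw [hxh] at hconv
    have hb : F (x + t⁻¹ • h) ≤ L * (1 + mnorm x + t⁻¹ * mnorm h) := by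
      refine (hFg _).trans ?_
      have := (mnorm_add_le x (t⁻¹ • h)).trans_eq (by rw [mnorm_smul, abs_of_pos (by positivity)])
      nlinarith
    have hpos := hFpos x
    have h1 : (1 - t) * F x ≤ F x := by nlinarith
    have hmn := mnorm_nonneg h
    calc F (x + h) ≤ (1 - t) * F x + t * F (x + t⁻¹ • h) := hconv
      _ ≤ F x + t * (L * (1 + mnorm x + t⁻¹ * mnorm h)) := by
          have := mul_le_mul_of_nonneg_left hb ht.le
          linarith
      _ = F x + L * mnorm h + t * (L * (1 + mnorm x)) := by
          field_simp; ring
  by_contra hcon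
  push_neg at hcon
  set ε := F (x + h) - (F x + L * mnorm h) with hε
  have hεpos : 0 < ε := by simp [hε]; linarith
  set q := L * (1 + mnorm x) with hq
  have hq0 : 0 ≤ q := by have := mnorm_nonneg x; positivity
  have ht' := key (min 1 (ε / (2 * (q + 1)))) (by positivity) (min_le_left _ _)
  have : min 1 (ε / (2 * (q + 1))) * q ≤ (ε / (2 * (q + 1))) * q :=
    mul_le_mul_of_nonneg_right (min_le_right _ _) hq0
  have hlt : (ε / (2 * (q + 1))) * q < ε := by
    rw [div_mul_eq_mul_div, div_lt_iff₀ (by positivity)]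
    nlinarith
  have : F (x + h) < F x + L * mnorm h + ε := by linarith
  simp only [hε] at this
  linarith

lemma F_lip (hFpos : ∀ z, 0 ≤ F z) (hFconv : ConvexOn ℝ Set.univ F)
    (hFg : ∀ z, F z ≤ L * (1 + mnorm z)) (hL : 0 ≤ L) (a b : Fin N → Fin n → ℝ) :
    |F a - F b| ≤ L * mnorm (a - b) := by
  rw [abs_sub_le_iff]
  constructor
  · have := F_le_add_lip hFpos hFconv hFg hL b (a - b)
    rw [add_sub_cancel] at this; linarith
  · have := F_le_add_lip hFpos hFconv hFg hL a (b - a)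
    rw [add_sub_cancel] at this
    have heq : mnorm (b - a) = mnorm (a - b) := by
      have h2 : b - a = (-1 : ℝ) • (a - b) := by module
      rw [h2, mnorm_smul]; simp
    rw [heq] at this
    linarith
end B


section B2
variable {N n : ℕ} {F : (Fin N → Fin n → ℝ) → ℝ} {L : ℝ}

lemma grad_ineq (hF : Differentiable ℝ F) (hFconv : ConvexOn ℝ Set.univ F)
    (z w : Fin N → Fin n → ℝ) :
    F z + mdot (DFmat F z) (w - z) ≤ F w := by
  set v := w - z with hv
  set g : ℝ → ℝ := fun t => F (z + t • v) with hg
  have hgconv := convexOn_line hFconv z v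
  have hder := hasDerivAt_line hF z v
  have hslope : Tendsto (slope g 0) (𝓝[>] 0) (𝓝 (mdot (DFmat F z) v)) :=
    (hasDerivAt_iff_tendsto_slope.mp hder).mono_left
      (nhdsWithin_mono 0 fun t ht => ne_of_gt ht)
  have hle : mdot (DFmat F z) v ≤ slope g 0 1 := by
    refine le_of_tendsto hslope ?_
    filter_upwards [Ioc_mem_nhdsGT_of_mem (Set.mem_Ico.mpr ⟨le_refl 0, one_pos⟩)] with t ht
    have h01 : (0:ℝ) < t := ht.1
    have := hgconv.secant_mono (mem_univ (0:ℝ)) (mem_univ t) (mem_univ 1) h01.ne' one_ne_zero ht.2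
    rw [slope_def_field, slope_def_field]
    exact this
  rw [slope_def_field] at hle
  have hg1 : g 1 = F w := by simp [hg, hv]
  have hg0 : g 0 = F z := by simp [hg]
  rw [hg1, hg0] at hle
  simp only [sub_zero, div_one] at hle
  linarith

lemma abs_mdot_DF_le (hFpos : ∀ z, 0 ≤ F z) (hF : Differentiable ℝ F)
    (hFconv : ConvexOn ℝ Set.univ F)
    (hFg : ∀ z, F z ≤ L * (1 + mnorm z)) (hL : 0 ≤ L) (z v : Fin N → Fin n → ℝ) :
    |mdot (DFmat F z) v| ≤ L * mnorm v := by
  have key : ∀ v' : Fin N → Fin n → ℝ, mdot (DFmat F z) v' ≤ L * mnorm v' := by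
    intro v'
    have h1 := grad_ineq hF hFconv z (z + v')
    rw [add_sub_cancel_left] at h1
    have h2 := F_le_add_lip hFpos hFconv hFg hL z v'
    linarith
  rw [abs_le]
  constructor
  · have h3 := key (-v)
    have h4 : mdot (DFmat F z) (-v) = - mdot (DFmat F z) v := by
      have : (-v : Fin N → Fin n → ℝ) = (-1 : ℝ) • v := by module
      rw [this, mdot_smul_right]; ring
    have h5 : mnorm (-v : Fin N → Fin n → ℝ) = mnorm v := by
      have : (-v : Fin N → Fin n → ℝ) = (-1 : ℝ) • v := by module
      rw [this, mnorm_smul]; simp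
    rw [h4, h5] at h3
    linarith
  · exact key v


lemma DF_bound (hFpos : ∀ z, 0 ≤ F z) (hF : Differentiable ℝ F)
    (hFconv : ConvexOn ℝ Set.univ F)
    (hFg : ∀ z, F z ≤ L * (1 + mnorm z)) (hL : 0 ≤ L) (z : Fin N → Fin n → ℝ) :
    mnorm (DFmat F z) ≤ L := by
  have h := (abs_mdot_DF_le hFpos hF hFconv hFg hL z (DFmat F z))
  rw [mdot_self_eq, abs_of_nonneg (by positivity)] at h
  rcases eq_or_lt_of_le (mnorm_nonneg (DFmat F z)) with h0 | h0
  · rw [← h0]; exact hL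
  · nlinarith

lemma subgrad_unique (hF : Differentiable ℝ F) (z p : Fin N → Fin n → ℝ)
    (h : ∀ w, F z + mdot p (w - z) ≤ F w) : p = DFmat F z := by
  have key : ∀ v : Fin N → Fin n → ℝ, mdot p v ≤ mdot (DFmat F z) v := by
    intro v
    set g : ℝ → ℝ := fun t => F (z + t • v) with hg
    have hder := hasDerivAt_line hF z v
    have hslope : Tendsto (slope g 0) (𝓝[>] 0) (𝓝 (mdot (DFmat F z) v)) :=
      (hasDerivAt_iff_tendsto_slope.mp hder).mono_left
        (nhdsWithin_mono 0 fun t ht => ne_of_gt ht)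
    refine ge_of_tendsto hslope ?_
    filter_upwards [self_mem_nhdsWithin] with t ht
    have ht0 : (0:ℝ) < t := ht
    have h1 := h (z + t • v)
    rw [add_sub_cancel_left, mdot_smul_right] at h1
    rw [slope_def_field]
    simp only [hg, sub_zero]
    rw [le_div_iff₀ ht0]
    simp only [zero_smul, add_zero]
    linarith
  have keyeq : ∀ v : Fin N → Fin n → ℝ, mdot (p - DFmat F z) v = 0 := by
    intro v
    have h1 := key v
    have h2 := key (-v)
    have hneg : ∀ A : Fin N → Fin n → ℝ, mdot A (-v) = - mdot A v := by
      intro A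
      have hv : (-v : Fin N → Fin n → ℝ) = (-1 : ℝ) • v := by module
      rw [hv, mdot_smul_right]; ring
    rw [hneg, hneg] at h2
    rw [mdot_sub_left]
    linarith
  have h0 := keyeq (p - DFmat F z)
  rw [mdot_self_eq] at h0
  have := (mnorm_eq_zero_iff (p - DFmat F z)).mp (by nlinarith [mnorm_nonneg (p - DFmat F z)])
  exact sub_eq_zero.mp this
end B2


set_option maxHeartbeats 1000000
section C
variable {n N : ℕ} {Ω : Set (EVec n)}

lemma hwd_zero : HasWeakDerivOn Ω (fun _ => (0 : Fin N → ℝ)) (fun _ => (0 : Fin N → Fin n → ℝ)) := by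
  refine ⟨integrable_zero _ _ _, integrable_zero _ _ _, ?_⟩
  intro φ _ _ _ a i
  simp

lemma test_bound {φ : EVec n → ℝ} (hφ1 : ContDiff ℝ 1 φ) (hφ2 : HasCompactSupport φ) (i : Fin n) :
    ∃ C, ∀ x, ‖fderiv ℝ φ x (EuclideanSpace.single i 1)‖ ≤ C := by
  obtain ⟨C, hC⟩ := (hφ1.continuous_fderiv one_ne_zero).bounded_above_of_compact_support (hφ2.fderiv (𝕜 := ℝ))
  refine ⟨C * ‖(EuclideanSpace.single i (1:ℝ))‖, fun x => ?_⟩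
  calc ‖fderiv ℝ φ x (EuclideanSpace.single i 1)‖
      ≤ ‖fderiv ℝ φ x‖ * ‖(EuclideanSpace.single i (1:ℝ))‖ := (fderiv ℝ φ x).le_opNorm _
  _ ≤ C * ‖(EuclideanSpace.single i (1:ℝ))‖ :=
      mul_le_mul_of_nonneg_right (hC x) (norm_nonneg _)

lemma comp_integrable {ι : Type*} [Fintype ι] {E : Type*} [NormedAddCommGroup E]
    [NormedSpace ℝ E] {f : EVec n → ι → E}
    (hf : IntegrableOn f Ω volume) (a : ι) :
    IntegrableOn (fun x => f x a) Ω volume := by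
  have := (ContinuousLinearMap.proj (R := ℝ) (φ := fun _ : ι => E) a).integrable_comp hf
  simpa [IntegrableOn] using this

lemma comp_integrable2 {f : EVec n → Fin N → Fin n → ℝ}
    (hf : IntegrableOn f Ω volume) (a : Fin N) (i : Fin n) :
    IntegrableOn (fun x => f x a i) Ω volume :=
  comp_integrable (comp_integrable hf a) i

lemma prod_integrable {f : EVec n → ℝ} (hf : IntegrableOn f Ω volume)
    {g : EVec n → ℝ} (hg : Continuous g) (hb : ∃ C, ∀ x, ‖g x‖ ≤ C) :
    IntegrableOn (fun x => f x * g x) Ω volume := by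
  have := hf.bdd_mul (hg.aestronglyMeasurable.restrict) (Eventually.of_forall hb.choose_spec)
  exact this.congr (Eventually.of_forall fun x => mul_comm _ _)

lemma hwd_smul_add (c : ℝ) {u w : EVec n → Fin N → ℝ} {Du Dw : EVec n → Fin N → Fin n → ℝ}
    (h1 : HasWeakDerivOn Ω u Du) (h2 : HasWeakDerivOn Ω w Dw) :
    HasWeakDerivOn Ω (fun x => u x + c • w x) (fun x => Du x + c • Dw x) := by
  refine ⟨h1.1.add ((h2.1.smul c)), h1.2.1.add ((h2.2.1.smul c)), ?_⟩
  intro φ hφ1 hφ2 hφ3 a i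
  set dφ : EVec n → ℝ := fun x => fderiv ℝ φ x (EuclideanSpace.single i 1) with hdφ
  have hdφc : Continuous dφ := by
    have h := hφ1.continuous_fderiv one_ne_zero
    exact ((ContinuousLinearMap.apply ℝ ℝ (EuclideanSpace.single i (1:ℝ))).continuous).comp h
  have hdφb : ∃ C, ∀ x, ‖dφ x‖ ≤ C := test_bound hφ1 hφ2 i
  have hφb : ∃ C, ∀ x, ‖φ x‖ ≤ C := hφ1.continuous.bounded_above_of_compact_support hφ2
  have hu1 : IntegrableOn (fun x => u x a * dφ x) Ω volume :=
    prod_integrable (comp_integrable h1.1 a) hdφc hdφb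
  have hw1 : IntegrableOn (fun x => w x a * dφ x) Ω volume :=
    prod_integrable (comp_integrable h2.1 a) hdφc hdφb
  have hu2 : IntegrableOn (fun x => Du x a i * φ x) Ω volume :=
    prod_integrable (comp_integrable2 h1.2.1 a i) hφ1.continuous hφb
  have hw2 : IntegrableOn (fun x => Dw x a i * φ x) Ω volume :=
    prod_integrable (comp_integrable2 h2.2.1 a i) hφ1.continuous hφb
  have e1 : ∀ x, (u x + c • w x) a * dφ x = u x a * dφ x + c * (w x a * dφ x) := by
    intro x; simp [Pi.add_apply, Pi.smul_apply, smul_eq_mul]; ring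
  have e2 : ∀ x, (Du x + c • Dw x) a i * φ x = Du x a i * φ x + c * (Dw x a i * φ x) := by
    intro x; simp [Pi.add_apply, Pi.smul_apply, smul_eq_mul]; ring
  calc ∫ x in Ω, (u x + c • w x) a * dφ x
      = ∫ x in Ω, (u x a * dφ x + c * (w x a * dφ x)) := by
        exact integral_congr_ae (Eventually.of_forall fun x => e1 x)
    _ = (∫ x in Ω, u x a * dφ x) + c * ∫ x in Ω, w x a * dφ x := by
        rw [integral_add hu1 (hw1.const_mul c), integral_const_mul]
    _ = (- ∫ x in Ω, Du x a i * φ x) + c * (- ∫ x in Ω, Dw x a i * φ x) := by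
        rw [h1.2.2 φ hφ1 hφ2 hφ3 a i, h2.2.2 φ hφ1 hφ2 hφ3 a i]
    _ = - ∫ x in Ω, (Du x a i * φ x + c * (Dw x a i * φ x)) := by
        rw [integral_add hu2 (hw2.const_mul c), integral_const_mul]; ring
    _ = - ∫ x in Ω, (Du x + c • Dw x) a i * φ x := by
        rw [integral_congr_ae (Eventually.of_forall fun x => e2 x)]

lemma integrable_mnorm_comp {μ : Measure (EVec n)} {B : EVec n → Fin N → Fin n → ℝ}
    (hB : Integrable B μ) : Integrable (fun x => mnorm (B x)) μ := by
  refine Integrable.mono' (hB.norm.const_mul (Real.sqrt (N * n)))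
    (by
      have h := Continuous.comp_aestronglyMeasurable (continuous_mnorm (N := N) (n := n)) hB.1
      exact h) (Eventually.of_forall fun x => ?_)
  rw [Real.norm_eq_abs, abs_of_nonneg (mnorm_nonneg _)]
  exact mnorm_le_pi_norm _

lemma integrable_mdot_bdd {μ : Measure (EVec n)} {A B : EVec n → Fin N → Fin n → ℝ}
    (hA : AEStronglyMeasurable A μ) (hB : AEStronglyMeasurable B μ)
    (hBn : Integrable (fun x => mnorm (B x)) μ) {C : ℝ}
    (hC : ∀ᵐ x ∂μ, mnorm (A x) ≤ C) :
    Integrable (fun x => mdot (A x) (B x)) μ := by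
  have hm : AEStronglyMeasurable (fun x => mdot (A x) (B x)) μ := by
    have h := Continuous.comp_aestronglyMeasurable (continuous_mdot (N := N) (n := n))
      (hA.prodMk hB)
    exact h
  refine Integrable.mono' (hBn.const_mul C) hm ?_
  filter_upwards [hC] with x hx
  rw [Real.norm_eq_abs]
  exact (abs_mdot_le _ _).trans (mul_le_mul_of_nonneg_right hx (mnorm_nonneg _))
end C



section EL
variable {n N : ℕ} {Ω : Set (EVec n)} {F : (Fin N → Fin n → ℝ) → ℝ} {L : ℝ}

lemma continuous_DFmat (hFC1 : ContDiff ℝ 1 F) : Continuous (fun z => DFmat F z) := by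
  unfold DFmat
  refine continuous_pi fun a => continuous_pi fun i => ?_
  exact (ContinuousLinearMap.apply ℝ ℝ (basisMat a i)).continuous.comp
    (hFC1.continuous_fderiv one_ne_zero)

lemma integrable_F_comp [IsFiniteMeasure (volume.restrict Ω)]
    (hFpos : ∀ z, 0 ≤ F z) (hFconv : ConvexOn ℝ Set.univ F) (hFC1 : ContDiff ℝ 1 F)
    (hFg : ∀ z, F z ≤ L * (1 + mnorm z)) (hL : 0 ≤ L)
    {B : EVec n → Fin N → Fin n → ℝ} (hB : IntegrableOn B Ω volume) :
    IntegrableOn (fun x => F (B x)) Ω volume := by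
  have hm : AEStronglyMeasurable (fun x => F (B x)) (volume.restrict Ω) := by
    have h := Continuous.comp_aestronglyMeasurable hFC1.continuous hB.1
    exact h
  refine Integrable.mono' ((integrable_const (F 0)).add
    ((integrable_mnorm_comp hB).const_mul L)) hm (Eventually.of_forall fun x => ?_)
  rw [Real.norm_eq_abs, abs_of_nonneg (hFpos _)]
  have h1 := F_lip hFpos hFconv hFg hL (B x) 0
  have h2 : mnorm ((B x) - 0) = mnorm (B x) := by rw [sub_zero]
  rw [h2] at h1
  have := abs_sub_le_iff.mp h1
  simp only [Pi.add_apply]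
  linarith [this.1]

/-- Euler–Lagrange equation for the minimiser. -/
lemma euler_lagrange [IsFiniteMeasure (volume.restrict Ω)]
    (hFpos : ∀ z, 0 ≤ F z) (hFC1 : ContDiff ℝ 1 F) (hFconv : ConvexOn ℝ Set.univ F)
    (hFg : ∀ z, F z ≤ L * (1 + mnorm z)) (hL : 0 ≤ L)
    {T₀ : EVec n → Fin N → Fin n → ℝ}
    (hTmeas : AEStronglyMeasurable T₀ (volume.restrict Ω))
    {M : ℝ} (hM : ∀ x ∈ Ω, mnorm (T₀ x) ≤ M) (hΩmeas : MeasurableSet Ω)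
    {u : EVec n → Fin N → ℝ} {Du : EVec n → Fin N → Fin n → ℝ}
    (hu : HasWeakDerivOn Ω u Du)
    (hmin : ∀ (w : EVec n → Fin N → ℝ) (Dw : EVec n → Fin N → Fin n → ℝ),
      HasWeakDerivOn Ω w Dw → FFgen Ω F T₀ Du ≤ FFgen Ω F T₀ Dw)
    {w : EVec n → Fin N → ℝ} {Dw : EVec n → Fin N → Fin n → ℝ}
    (hw : HasWeakDerivOn Ω w Dw) :
    ∫ x in Ω, mdot (DFmat F (Du x) - T₀ x) (Dw x) = 0 := by
  have hFdiff : Differentiable ℝ F := hFC1.differentiable one_ne_zero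
  have haeΩ : ∀ᵐ x ∂(volume.restrict Ω), x ∈ Ω := ae_restrict_mem hΩmeas
  have hDu_meas := hu.2.1.aestronglyMeasurable
  have hDF_meas : AEStronglyMeasurable (fun x => DFmat F (Du x)) (volume.restrict Ω) := by
    have h := Continuous.comp_aestronglyMeasurable (continuous_DFmat (n := n) (N := N) hFC1)
      hDu_meas
    exact h
  have hDFb : ∀ᵐ x ∂(volume.restrict Ω), mnorm (DFmat F (Du x)) ≤ L :=
    Eventually.of_forall fun x => DF_bound hFpos hFdiff hFconv hFg hL (Du x)
  have hTb : ∀ᵐ x ∂(volume.restrict Ω), mnorm (T₀ x) ≤ M :=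
    haeΩ.mono fun x hx => hM x hx
  -- the "half" inequality
  have half : ∀ (w : EVec n → Fin N → ℝ) (Dw : EVec n → Fin N → Fin n → ℝ),
      HasWeakDerivOn Ω w Dw → 0 ≤ ∫ x in Ω, mdot (DFmat F (Du x) - T₀ x) (Dw x) := by
    clear hw; clear w Dw
    intro w Dw hw
    have hDw_meas := hw.2.1.aestronglyMeasurable
    have hDwn_int : IntegrableOn (fun x => mnorm (Dw x)) Ω volume := integrable_mnorm_comp hw.2.1
    have hT₀Dw_int : IntegrableOn (fun x => mdot (T₀ x) (Dw x)) Ω volume :=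
      integrable_mdot_bdd hTmeas hDw_meas hDwn_int hTb
    have hDFDw_int : IntegrableOn (fun x => mdot (DFmat F (Du x)) (Dw x)) Ω volume :=
      integrable_mdot_bdd hDF_meas hDw_meas hDwn_int hDFb
    have hT₀Du_int : IntegrableOn (fun x => mdot (T₀ x) (Du x)) Ω volume :=
      integrable_mdot_bdd hTmeas hDu_meas (integrable_mnorm_comp hu.2.1) hTb
    set tk : ℕ → ℝ := fun k => ((k : ℝ) + 1)⁻¹ with htk
    have htkpos : ∀ k, 0 < tk k := fun k => by positivity
    have hFint : ∀ t : ℝ, IntegrableOn (fun x => F (Du x + t • Dw x)) Ω volume := fun t =>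
      integrable_F_comp hFpos hFconv hFC1 hFg hL (hu.2.1.add (hw.2.1.smul t))
    have hFDu_int : IntegrableOn (fun x => F (Du x)) Ω volume :=
      integrable_F_comp hFpos hFconv hFC1 hFg hL hu.2.1
    -- pointwise convergence of difference quotients
    have hconv_pt : ∀ x, Tendsto
        (fun k => (F (Du x + tk k • Dw x) - F (Du x)) / tk k) atTop
        (𝓝 (mdot (DFmat F (Du x)) (Dw x))) := by
      intro x
      have hd := hasDerivAt_line hFdiff (Du x) (Dw x)
      have h1 := hasDerivAt_iff_tendsto_slope.mp hd
      have h2 : Tendsto tk atTop (𝓝[≠] (0:ℝ)) := by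
        refine tendsto_nhdsWithin_of_tendsto_nhds_of_eventually_within _ ?_
          (Eventually.of_forall fun k => (htkpos k).ne')
        have := tendsto_one_div_add_atTop_nhds_zero_nat (𝕜 := ℝ)
        simpa [htk, one_div] using this
      have h3 := h1.comp h2
      have heq : ∀ k, slope (fun t : ℝ => F (Du x + t • Dw x)) 0 (tk k)
          = (F (Du x + tk k • Dw x) - F (Du x)) / tk k := by
        intro k
        rw [slope_def_field]
        simp
      refine h3.congr fun k => ?_
      simpa using heq k
    -- uniform bound
    have hbd : ∀ k, ∀ᵐ x ∂(volume.restrict Ω),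
        ‖(F (Du x + tk k • Dw x) - F (Du x)) / tk k‖ ≤ L * mnorm (Dw x) := by
      intro k
      refine Eventually.of_forall fun x => ?_
      have h1 := F_lip hFpos hFconv hFg hL (Du x + tk k • Dw x) (Du x)
      rw [add_sub_cancel_left, mnorm_smul, abs_of_pos (htkpos k)] at h1
      rw [Real.norm_eq_abs, abs_div, abs_of_pos (htkpos k), div_le_iff₀ (htkpos k)]
      calc |F (Du x + tk k • Dw x) - F (Du x)| ≤ L * (tk k * mnorm (Dw x)) := h1
        _ = L * mnorm (Dw x) * tk k := by ring
    -- dominated convergence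
    have hmeask : ∀ k : ℕ, AEStronglyMeasurable
        (fun x => (F (Du x + tk k • Dw x) - F (Du x)) / tk k) (volume.restrict Ω) := by
      intro k
      have hck : Continuous (fun p : (Fin N → Fin n → ℝ) × (Fin N → Fin n → ℝ) =>
          (F (p.1 + tk k • p.2) - F p.1) / tk k) := by
        refine Continuous.div_const ?_ _
        exact (hFC1.continuous.comp (continuous_fst.add (continuous_snd.const_smul (tk k)))).sub
          (hFC1.continuous.comp continuous_fst)
      have h := Continuous.comp_aestronglyMeasurable hck (hDu_meas.prodMk hDw_meas)
      exact h
    have hlim : Tendsto (fun k => ∫ x in Ω, (F (Du x + tk k • Dw x) - F (Du x)) / tk k)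
        atTop (𝓝 (∫ x in Ω, mdot (DFmat F (Du x)) (Dw x))) := by
      refine tendsto_integral_of_dominated_convergence (fun x => L * mnorm (Dw x)) hmeask
        (hDwn_int.const_mul L) hbd (Eventually.of_forall fun x => hconv_pt x)
    -- minimality gives the lower bound
    have hEL1 : ∀ k : ℕ, ∫ x in Ω, mdot (T₀ x) (Dw x)
        ≤ ∫ x in Ω, (F (Du x + tk k • Dw x) - F (Du x)) / tk k := by
      intro k
      have hpair := hwd_smul_add (tk k) hu hw
      have hm := hmin _ _ hpair
      unfold FFgen at hm
      have hsplit1 : ∫ x in Ω, (F (Du x) - mdot (T₀ x) (Du x))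
          = (∫ x in Ω, F (Du x)) - ∫ x in Ω, mdot (T₀ x) (Du x) :=
        integral_sub hFDu_int hT₀Du_int
      have hint2 : IntegrableOn (fun x => mdot (T₀ x) (Du x) + tk k * mdot (T₀ x) (Dw x))
          Ω volume := hT₀Du_int.add (hT₀Dw_int.const_mul _)
      have hsplit2 : ∫ x in Ω, (F (Du x + tk k • Dw x) - mdot (T₀ x) (Du x + tk k • Dw x))
          = (∫ x in Ω, F (Du x + tk k • Dw x)) - ((∫ x in Ω, mdot (T₀ x) (Du x))
            + tk k * ∫ x in Ω, mdot (T₀ x) (Dw x)) := by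
        have e : ∀ x, F (Du x + tk k • Dw x) - mdot (T₀ x) (Du x + tk k • Dw x)
            = F (Du x + tk k • Dw x)
              - (mdot (T₀ x) (Du x) + tk k * mdot (T₀ x) (Dw x)) := by
          intro x
          rw [mdot_add_right, mdot_smul_right]
        rw [integral_congr_ae (Eventually.of_forall e), integral_sub (hFint _) hint2,
          integral_add hT₀Du_int (hT₀Dw_int.const_mul _), integral_const_mul]
      rw [hsplit1, hsplit2] at hm
      have hdiff : ∫ x in Ω, (F (Du x + tk k • Dw x) - F (Du x)) / tk k
          = ((∫ x in Ω, F (Du x + tk k • Dw x)) - ∫ x in Ω, F (Du x)) / tk k := by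
        rw [← integral_sub (hFint _) hFDu_int, integral_div]
      rw [hdiff, le_div_iff₀ (htkpos k)]
      nlinarith [htkpos k]
    have hfinal := ge_of_tendsto hlim (Eventually.of_forall hEL1)
    have hsub : ∫ x in Ω, mdot (DFmat F (Du x) - T₀ x) (Dw x)
        = (∫ x in Ω, mdot (DFmat F (Du x)) (Dw x)) - ∫ x in Ω, mdot (T₀ x) (Dw x) := by
      rw [← integral_sub hDFDw_int hT₀Dw_int]
      exact integral_congr_ae (Eventually.of_forall fun x => mdot_sub_left _ _ _)
    rw [hsub]
    linarith
  have h1 := half w Dw hw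
  have h2 := half _ _ (hwd_smul_add (-1 : ℝ) hwd_zero hw)
  have he : ∀ x, mdot (DFmat F (Du x) - T₀ x) ((fun _ => (0:Fin N → Fin n → ℝ)) x + (-1:ℝ) • Dw x)
      = - mdot (DFmat F (Du x) - T₀ x) (Dw x) := by
    intro x
    rw [zero_add, mdot_smul_right]
    ring
  rw [integral_congr_ae (Eventually.of_forall he), integral_neg] at h2
  linarith

end EL

/-- **Lemma 4.10.** If `u ∈ W^{1,1}(Ω;ℝ^N)` minimises `𝓕[w] = ∫_Ω (F(∇w) − T₀·∇w) dx`,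
then `σ = D_zF(∇u) − T₀` lies in `L^∞_⊥(Ω;ℝ^{N×n})` and is the unique maximiser of the
dual functional `ℛ_{T₀}[χ] = −∫_Ω F*(T₀+χ) dx` over `L^∞_⊥(Ω;ℝ^{N×n})`. -/
theorem dual_solution_from_minimiser
    {n N : ℕ} (Ω : Set (EVec n))
    (hΩ : IsLipschitzDomain Ω) (hΩbdd : Bornology.IsBounded Ω)
    (ν L : ℝ) (hν : 0 < ν) (hνL : ν ≤ L)
    (F : (Fin N → Fin n → ℝ) → ℝ)
    (hFpos : ∀ z, 0 ≤ F z)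
    (hFC1 : ContDiff ℝ 1 F)
    (hFconv : ConvexOn ℝ Set.univ F)
    (hFgrowth : ∀ z, ν * mnorm z - L ≤ F z ∧ F z ≤ L * (1 + mnorm z))
    (T₀ : EVec n → Fin N → Fin n → ℝ)
    (hTmeas : AEStronglyMeasurable T₀ (volume.restrict Ω))
    (hTbdd : ∃ M : ℝ, ∀ x ∈ Ω, mnorm (T₀ x) ≤ M)
    (u : EVec n → Fin N → ℝ) (Du : EVec n → Fin N → Fin n → ℝ)
    (hu : HasWeakDerivOn Ω u Du)
    (hmin : ∀ (w : EVec n → Fin N → ℝ) (Dw : EVec n → Fin N → Fin n → ℝ),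
      HasWeakDerivOn Ω w Dw → FFgen Ω F T₀ Du ≤ FFgen Ω F T₀ Dw) :
    MemLinfPerp Ω (fun x => DFmat F (Du x) - T₀ x) ∧
    (∀ χ : EVec n → Fin N → Fin n → ℝ, MemLinfPerp Ω χ →
      Rdual Ω F T₀ χ ≤ Rdual Ω F T₀ (fun x => DFmat F (Du x) - T₀ x)) ∧
    (∀ χ : EVec n → Fin N → Fin n → ℝ, MemLinfPerp Ω χ →
      Rdual Ω F T₀ χ = Rdual Ω F T₀ (fun x => DFmat F (Du x) - T₀ x) →
      χ =ᵐ[volume.restrict Ω] fun x => DFmat F (Du x) - T₀ x) := by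
  obtain ⟨M, hM⟩ := hTbdd
  have hΩmeas : MeasurableSet Ω := hΩ.1.measurableSet
  have hL : 0 ≤ L := le_trans hν.le hνL
  have hM0 : 0 ≤ M := by
    obtain ⟨x, hx⟩ := hΩ.2.1
    exact le_trans (mnorm_nonneg _) (hM x hx)
  have hvol : volume Ω ≠ ⊤ := hΩbdd.measure_lt_top.ne
  haveI : IsFiniteMeasure (volume.restrict Ω) := by
    constructor
    rw [Measure.restrict_apply_univ]
    exact lt_top_iff_ne_top.mpr hvol
  have hFdiff : Differentiable ℝ F := hFC1.differentiable one_ne_zero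
  have hFg : ∀ z, F z ≤ L * (1 + mnorm z) := fun z => (hFgrowth z).2
  have haeΩ : ∀ᵐ x ∂(volume.restrict Ω), x ∈ Ω := ae_restrict_mem hΩmeas
  have hDu_meas := hu.2.1.aestronglyMeasurable
  have hDF_meas : AEStronglyMeasurable (fun x => DFmat F (Du x)) (volume.restrict Ω) := by
    have h := Continuous.comp_aestronglyMeasurable (continuous_DFmat (n := n) (N := N) hFC1)
      hDu_meas
    exact h
  have hDFb : ∀ᵐ x ∂(volume.restrict Ω), mnorm (DFmat F (Du x)) ≤ L :=
    Eventually.of_forall fun x => DF_bound hFpos hFdiff hFconv hFg hL (Du x)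
  have hTb : ∀ᵐ x ∂(volume.restrict Ω), mnorm (T₀ x) ≤ M := haeΩ.mono fun x hx => hM x hx
  have EL : ∀ (w : EVec n → Fin N → ℝ) (Dw : EVec n → Fin N → Fin n → ℝ),
      HasWeakDerivOn Ω w Dw → ∫ x in Ω, mdot (DFmat F (Du x) - T₀ x) (Dw x) = 0 :=
    fun w Dw hw => euler_lagrange hFpos hFC1 hFconv hFg hL hTmeas hM hΩmeas hu hmin hw
  have hmem : MemLinfPerp Ω (fun x => DFmat F (Du x) - T₀ x) := by
    refine ⟨hDF_meas.sub hTmeas, ⟨L + M, fun x hx => ?_⟩, EL⟩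
    exact (mnorm_sub_le _ _).trans
      (add_le_add (DF_bound hFpos hFdiff hFconv hFg hL (Du x)) (hM x hx))
  -- integrability facts
  have hDun_int : IntegrableOn (fun x => mnorm (Du x)) Ω volume := integrable_mnorm_comp hu.2.1
  have hFDu_int : IntegrableOn (fun x => F (Du x)) Ω volume :=
    integrable_F_comp hFpos hFconv hFC1 hFg hL hu.2.1
  have hT₀Du_int : IntegrableOn (fun x => mdot (T₀ x) (Du x)) Ω volume :=
    integrable_mdot_bdd hTmeas hDu_meas hDun_int hTb
  have hDFDu_int : IntegrableOn (fun x => mdot (DFmat F (Du x)) (Du x)) Ω volume :=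
    integrable_mdot_bdd hDF_meas hDu_meas hDun_int hDFb
  have hσDu0 : ∫ x in Ω, mdot (DFmat F (Du x) - T₀ x) (Du x) = 0 := EL u Du hu
  have hDFeqT : ∫ x in Ω, mdot (DFmat F (Du x)) (Du x) = ∫ x in Ω, mdot (T₀ x) (Du x) := by
    have hsub : ∫ x in Ω, mdot (DFmat F (Du x) - T₀ x) (Du x)
        = (∫ x in Ω, mdot (DFmat F (Du x)) (Du x)) - ∫ x in Ω, mdot (T₀ x) (Du x) := by
      rw [← integral_sub hDFDu_int hT₀Du_int]
      exact integral_congr_ae (Eventually.of_forall fun x => mdot_sub_left _ _ _)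
    rw [hσDu0] at hsub
    linarith
  have hFF : FFgen Ω F T₀ Du = (∫ x in Ω, F (Du x)) - ∫ x in Ω, mdot (T₀ x) (Du x) := by
    unfold FFgen
    exact integral_sub hFDu_int hT₀Du_int
  set r : ℝ := F 0 * (volume Ω).toReal - FFgen Ω F T₀ Du with hr
  have hr0 : 0 ≤ r := by
    have h0 := hmin (fun _ => 0) (fun _ => 0) hwd_zero
    have hz : FFgen Ω F T₀ (fun _ => (0 : Fin N → Fin n → ℝ)) = F 0 * (volume Ω).toReal := by
      unfold FFgen
      have he : ∀ x : EVec n, F ((fun _ => (0 : Fin N → Fin n → ℝ)) x)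
          - mdot (T₀ x) ((fun _ => (0 : Fin N → Fin n → ℝ)) x) = F 0 := by
        intro x; simp [mdot]
      rw [integral_congr_ae (Eventually.of_forall he), setIntegral_const, smul_eq_mul, mul_comm]; rfl
    rw [hr]
    rw [hz] at h0
    linarith
  -- the conjugate at the gradient
  set b : EVec n → ℝ := fun x => mdot (DFmat F (Du x)) (Du x) - F (Du x) + F 0 with hb
  have hb_nonneg : ∀ x, 0 ≤ b x := by
    intro x
    have h1 := grad_ineq hFdiff hFconv (Du x) 0
    have h2 : mdot (DFmat F (Du x)) ((0 : Fin N → Fin n → ℝ) - Du x)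
        = - mdot (DFmat F (Du x)) (Du x) := by
      rw [mdot_sub_right]
      simp [mdot]
    rw [h2] at h1
    simp only [hb]
    linarith
  have hb_int : IntegrableOn b Ω volume :=
    (hDFDu_int.sub hFDu_int).add (integrable_const (F 0))
  have hb_sum : ∫ x in Ω, b x = r := by
    have : ∫ x in Ω, b x = ((∫ x in Ω, mdot (DFmat F (Du x)) (Du x))
        - ∫ x in Ω, F (Du x)) + F 0 * (volume Ω).toReal := by
      simp only [hb]
      have hI : IntegrableOn (fun x => mdot (DFmat F (Du x)) (Du x) - F (Du x)) Ω volume :=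
        hDFDu_int.sub hFDu_int
      rw [integral_add hI (integrable_const (F 0)),
        integral_sub hDFDu_int hFDu_int, setIntegral_const, smul_eq_mul, mul_comm]; rfl
    rw [this, hDFeqT, hr, hFF]
    ring
  have hAσ : ∀ x : EVec n, FstarShift F (T₀ x + (DFmat F (Du x) - T₀ x))
      = ENNReal.ofReal (b x) := by
    intro x
    have hTσ : T₀ x + (DFmat F (Du x) - T₀ x) = DFmat F (Du x) := by abel
    rw [hTσ]
    unfold FstarShift
    apply le_antisymm
    · refine iSup_le fun w => ?_
      apply ENNReal.ofReal_le_ofReal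
      have h1 := grad_ineq hFdiff hFconv (Du x) w
      rw [mdot_sub_right] at h1
      simp only [hb]
      linarith
    · exact le_iSup (fun w => ENNReal.ofReal (mdot (DFmat F (Du x)) w - F w + F 0)) (Du x)
  have hlintσ : (∫⁻ x in Ω, FstarShift F (T₀ x
      + (fun x => DFmat F (Du x) - T₀ x) x) : ℝ≥0∞) = ENNReal.ofReal r := by
    rw [lintegral_congr fun x => hAσ x,
      ← ofReal_integral_eq_lintegral_ofReal hb_int (Eventually.of_forall hb_nonneg), hb_sum]
  -- main estimates for an arbitrary dual competitor
  have main : ∀ χ : EVec n → Fin N → Fin n → ℝ, MemLinfPerp Ω χ →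
      (Rdual Ω F T₀ χ ≤ Rdual Ω F T₀ (fun x => DFmat F (Du x) - T₀ x)) ∧
      (Rdual Ω F T₀ χ = Rdual Ω F T₀ (fun x => DFmat F (Du x) - T₀ x) →
        χ =ᵐ[volume.restrict Ω] fun x => DFmat F (Du x) - T₀ x) := by
    intro χ hχ
    obtain ⟨hχmeas, ⟨Cχ, hCχ⟩, hχperp⟩ := hχ
    have hχb : ∀ᵐ x ∂(volume.restrict Ω), mnorm (χ x) ≤ Cχ := haeΩ.mono fun x hx => hCχ x hx
    have hχDu_int : IntegrableOn (fun x => mdot (χ x) (Du x)) Ω volume :=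
      integrable_mdot_bdd hχmeas hDu_meas hDun_int hχb
    set g : EVec n → ℝ := fun x => mdot (T₀ x + χ x) (Du x) - F (Du x) + F 0 with hg
    have hg_int : IntegrableOn g Ω volume := by
      have hI1 : IntegrableOn
          (fun x => mdot (T₀ x) (Du x) + mdot (χ x) (Du x)) Ω volume :=
        hT₀Du_int.add hχDu_int
      refine ((hI1.sub hFDu_int).add (integrable_const (F 0))).congr
        (Eventually.of_forall fun x => ?_)
      simp only [hg, Pi.add_apply, Pi.sub_apply]
      rw [mdot_add_left]
    have hgsum : ∫ x in Ω, g x = r := by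
      have hχ0 : ∫ x in Ω, mdot (χ x) (Du x) = 0 := hχperp u Du hu
      have : ∫ x in Ω, g x = ((∫ x in Ω, mdot (T₀ x) (Du x))
          + ∫ x in Ω, mdot (χ x) (Du x)) - (∫ x in Ω, F (Du x))
          + F 0 * (volume Ω).toReal := by
        simp only [hg]
        have he : ∀ x : EVec n, mdot (T₀ x + χ x) (Du x) - F (Du x) + F 0
            = (mdot (T₀ x) (Du x) + mdot (χ x) (Du x)) - F (Du x) + F 0 := by
          intro x; rw [mdot_add_left]
        have hI1 : IntegrableOn
            (fun x => mdot (T₀ x) (Du x) + mdot (χ x) (Du x)) Ω volume :=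
          hT₀Du_int.add hχDu_int
        have hI2 : IntegrableOn
            (fun x => mdot (T₀ x) (Du x) + mdot (χ x) (Du x) - F (Du x)) Ω volume :=
          hI1.sub hFDu_int
        rw [integral_congr_ae (Eventually.of_forall he),
          integral_add hI2 (integrable_const (F 0)),
          integral_sub hI1 hFDu_int,
          integral_add hT₀Du_int hχDu_int, setIntegral_const, smul_eq_mul, mul_comm]; rfl
      rw [this, hχ0, hr, hFF]
      ring
    set gp : EVec n → ℝ := fun x => max (g x) 0 with hgp
    have hgp_int : IntegrableOn gp Ω volume := hg_int.pos_part
    have hgp_nonneg : ∀ x, 0 ≤ gp x := fun x => le_max_right _ _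
    have hofReal_eq : ∀ x, ENNReal.ofReal (g x) = ENNReal.ofReal (gp x) := by
      intro x
      rcases le_total (g x) 0 with h | h
      · simp only [hgp]
        rw [max_eq_right h, ENNReal.ofReal_eq_zero.mpr h, ENNReal.ofReal_zero]
      · simp only [hgp]
        rw [max_eq_left h]
    have hlin_g : (∫⁻ x in Ω, ENNReal.ofReal (g x) : ℝ≥0∞)
        = ENNReal.ofReal (∫ x in Ω, gp x) := by
      rw [lintegral_congr hofReal_eq,
        ← ofReal_integral_eq_lintegral_ofReal hgp_int (Eventually.of_forall hgp_nonneg)]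
    have hAχ_ge : ∀ x, ENNReal.ofReal (g x) ≤ FstarShift F (T₀ x + χ x) := fun x =>
      le_iSup (fun w => ENNReal.ofReal (mdot (T₀ x + χ x) w - F w + F 0)) (Du x)
    have hgple : ENNReal.ofReal r ≤ ENNReal.ofReal (∫ x in Ω, gp x) := by
      apply ENNReal.ofReal_le_ofReal
      rw [← hgsum]
      exact integral_mono hg_int hgp_int fun x => le_max_left _ _
    have hge : ENNReal.ofReal r ≤ ∫⁻ x in Ω, FstarShift F (T₀ x + χ x) := by
      calc ENNReal.ofReal r ≤ ENNReal.ofReal (∫ x in Ω, gp x) := hgple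
        _ = ∫⁻ x in Ω, ENNReal.ofReal (g x) := hlin_g.symm
        _ ≤ ∫⁻ x in Ω, FstarShift F (T₀ x + χ x) := lintegral_mono hAχ_ge
    constructor
    · -- weak duality
      unfold Rdual
      rw [hlintσ]
      exact EReal.sub_le_sub le_rfl (EReal.coe_ennreal_le_coe_ennreal_iff.mpr hge)
    · -- uniqueness
      intro heq
      unfold Rdual at heq
      rw [hlintσ] at heq
      set X : ℝ≥0∞ := ∫⁻ x in Ω, FstarShift F (T₀ x + χ x) with hX
      have hcoe_r : ((ENNReal.ofReal r : ℝ≥0∞) : EReal) = (r : EReal) := by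
        rw [EReal.coe_ennreal_ofReal, max_eq_left hr0]
      have hXne : X ≠ ⊤ := by
        intro htop
        rw [htop] at heq
        rw [EReal.coe_ennreal_top, EReal.sub_top] at heq
        rw [hcoe_r, ← EReal.coe_sub] at heq
        exact EReal.bot_ne_coe _ heq
      have hXr : X = ENNReal.ofReal r := by
        have h1 : ((X : ℝ≥0∞) : EReal) = ((X.toReal : ℝ) : EReal) := by
          conv_lhs => rw [← ENNReal.ofReal_toReal hXne]
          rw [EReal.coe_ennreal_ofReal, max_eq_left ENNReal.toReal_nonneg]
        rw [h1, hcoe_r, ← EReal.coe_sub, ← EReal.coe_sub, EReal.coe_eq_coe_iff] at heq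
        have : X.toReal = r := by linarith
        rw [← ENNReal.ofReal_toReal hXne, this]
      -- all inequalities are equalities
      have hXg : (∫⁻ x in Ω, ENNReal.ofReal (g x) : ℝ≥0∞) = ENNReal.ofReal r := by
        refine le_antisymm ?_ ?_
        · rw [hlin_g]
          refine ENNReal.ofReal_le_ofReal ?_
          have h2 : ENNReal.ofReal (∫ x in Ω, gp x) ≤ ENNReal.ofReal r := by
            rw [← hXr]
            calc ENNReal.ofReal (∫ x in Ω, gp x) = ∫⁻ x in Ω, ENNReal.ofReal (g x) :=
                hlin_g.symm
              _ ≤ X := lintegral_mono hAχ_ge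
          have h3 := (ENNReal.ofReal_le_ofReal_iff hr0).mp h2
          linarith
        · calc ENNReal.ofReal r ≤ ENNReal.ofReal (∫ x in Ω, gp x) := hgple
            _ = ∫⁻ x in Ω, ENNReal.ofReal (g x) := hlin_g.symm
      have hgpsum : ∫ x in Ω, gp x = r := by
        have h2 : ENNReal.ofReal (∫ x in Ω, gp x) = ENNReal.ofReal r := by
          rw [← hlin_g, hXg]
        have hgpnn : 0 ≤ ∫ x in Ω, gp x := integral_nonneg hgp_nonneg
        exact (ENNReal.ofReal_eq_ofReal_iff hgpnn hr0).mp h2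
      -- g ≥ 0 a.e.
      have hgnn : ∀ᵐ x ∂(volume.restrict Ω), 0 ≤ g x := by
        have hdiff_int : IntegrableOn (fun x => gp x - g x) Ω volume := hgp_int.sub hg_int
        have hdiff_nn : 0 ≤ᵐ[volume.restrict Ω] fun x => gp x - g x :=
          Eventually.of_forall fun x => by simp [hgp, le_max_left]
        have hzero : ∫ x in Ω, (gp x - g x) = 0 := by
          rw [integral_sub hgp_int hg_int, hgpsum, hgsum]
          ring
        have := (integral_eq_zero_iff_of_nonneg_ae hdiff_nn hdiff_int).mp hzero
        filter_upwards [this] with x hx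
        have : gp x - g x = 0 := hx
        have := le_max_left (g x) 0
        simp only [hgp] at *
        nlinarith [le_max_right (g x) 0]
      -- measurability of g in ℝ≥0∞
      have hg_meas : AEMeasurable (fun x => ENNReal.ofReal (g x)) (volume.restrict Ω) :=
        (hg_int.aestronglyMeasurable.aemeasurable).ennreal_ofReal
      -- countable dense family of test directions
      set e : ℕ → (Fin N → Fin n → ℝ) := TopologicalSpace.denseSeq _ with he
      have hek : ∀ k : ℕ, ∀ᵐ x ∂(volume.restrict Ω),
          ENNReal.ofReal (mdot (T₀ x + χ x) (e k) - F (e k) + F 0)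
            ≤ ENNReal.ofReal (g x) := by
        intro k
        set h : EVec n → ℝ≥0∞ := fun x =>
          max (ENNReal.ofReal (mdot (T₀ x + χ x) (e k) - F (e k) + F 0))
            (ENNReal.ofReal (g x)) with hh
        have htermmeas : AEMeasurable
            (fun x => ENNReal.ofReal (mdot (T₀ x + χ x) (e k) - F (e k) + F 0))
            (volume.restrict Ω) := by
          have hc : Continuous (fun A : Fin N → Fin n → ℝ => mdot A (e k) - F (e k) + F 0) := by
            have h1 : Continuous (fun A : Fin N → Fin n → ℝ => mdot A (e k)) := by
              have h2 : Continuous (fun A : Fin N → Fin n → ℝ => (A, e k)) :=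
                continuous_id.prodMk continuous_const
              exact (continuous_mdot (N := N) (n := n)).comp h2
            exact (h1.sub continuous_const).add continuous_const
          have h3 := Continuous.comp_aestronglyMeasurable hc (hTmeas.add hχmeas)
          exact h3.aemeasurable.ennreal_ofReal
        have hh_meas : AEMeasurable h (volume.restrict Ω) := htermmeas.max hg_meas
        have hhle : ∀ x, h x ≤ FstarShift F (T₀ x + χ x) := by
          intro x
          refine max_le ?_ (hAχ_ge x)
          exact le_iSup (fun w => ENNReal.ofReal (mdot (T₀ x + χ x) w - F w + F 0)) (e k)
        have hint_h : (∫⁻ x in Ω, h x : ℝ≥0∞) = ENNReal.ofReal r := by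
          refine le_antisymm ?_ ?_
          · rw [← hXr]
            exact lintegral_mono hhle
          · rw [← hXg]
            exact lintegral_mono fun x => le_max_right _ _
        have hle2 : (fun x => ENNReal.ofReal (g x)) ≤ᵐ[volume.restrict Ω] h :=
          Eventually.of_forall fun x => le_max_right _ _
        have hsub := lintegral_sub' (f := h) hg_meas
          (by rw [hXg]; exact ENNReal.ofReal_ne_top) hle2
        rw [hXg, hint_h, tsub_self] at hsub
        have hzero := (lintegral_eq_zero_iff' (hh_meas.sub hg_meas)).mp hsub
        filter_upwards [hzero] with x hx
        have hx' : h x - ENNReal.ofReal (g x) = 0 := hx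
        have hle := tsub_eq_zero_iff_le.mp hx'
        exact le_trans (le_max_left _ _) hle
      have hallk := ae_all_iff.mpr hek
      filter_upwards [hallk, hgnn] with x hx hgx
      -- pass from the dense family to all directions
      have hall : ∀ w : Fin N → Fin n → ℝ,
          mdot (T₀ x + χ x) w - F w + F 0 ≤ g x := by
        have hSc : IsClosed {w : Fin N → Fin n → ℝ |
            mdot (T₀ x + χ x) w - F w + F 0 ≤ g x} := by
          refine isClosed_le ?_ continuous_const
          have h1 : Continuous (fun w : Fin N → Fin n → ℝ => mdot (T₀ x + χ x) w) := by
            have h2 : Continuous (fun w : Fin N → Fin n → ℝ => (T₀ x + χ x, w)) :=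
              continuous_const.prodMk continuous_id
            exact (continuous_mdot (N := N) (n := n)).comp h2
          exact (h1.sub hFC1.continuous).add continuous_const
        have hrange : Set.range e ⊆ {w : Fin N → Fin n → ℝ |
            mdot (T₀ x + χ x) w - F w + F 0 ≤ g x} := by
          rintro w ⟨k, rfl⟩
          exact (ENNReal.ofReal_le_ofReal_iff hgx).mp (hx k)
        have hclo := closure_minimal hrange hSc
        intro w
        exact hclo (TopologicalSpace.denseRange_denseSeq _ w)
      have hsubgrad : ∀ w, F (Du x) + mdot (T₀ x + χ x) (w - Du x) ≤ F w := by
        intro w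
        have h1 := hall w
        simp only [hg] at h1
        rw [mdot_sub_right]
        linarith
      have huniq := subgrad_unique hFdiff (Du x) (T₀ x + χ x) hsubgrad
      have : χ x = DFmat F (Du x) - T₀ x := by
        rw [← huniq]
        abel
      exact this
  exact ⟨hmem, fun χ hχ => (main χ hχ).1, fun χ hχ => (main χ hχ).2⟩
end
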